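/- Fix i ∈ {1,…,N} with T₂(i) and T₁(i) nonempty. Let d_T and q_T be reals with r²/3 ≤ d_T ≤ r² and 0 ≤ q_T ≤ 1, and suppose P_{(j,l)∈T₂(i)×T₁(i)}[z_jᵀz_l ≤ d_T] ≤ q_T. Then E_{(j,l)∈T₂(i)×T₁(i)}[z_jᵀz_l] ≥ (3/2)·d_T − (1/2 + √(6 q_T))·r². -/

import Mathlib

open Finset
open scoped BigOperators RealInnerProductSpace

/-- The set of indices whose label is `k`. -/
def classSet {N K : ℕ} (y : Fin N → Fin K) (k : Fin K) : Finset (Fin N) :=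
  Finset.univ.filter (fun j => y j = k)

/-- `T₂(i)`: the indices `j` with `ŵ i j = 1`. -/
def T2 {N : ℕ} (w : Fin N → Fin N → Bool) (i : Fin N) : Finset (Fin N) :=
  Finset.univ.filter (fun j => w i j = true)

/-- `T₁(i)`: the indices `j` in the class of `i` with `ŵ i j = 0`. -/
def T1 {N K : ℕ} (y : Fin N → Fin K) (w : Fin N → Fin N → Bool) (i : Fin N) :
    Finset (Fin N) :=
  Finset.univ.filter (fun j => y j = y i ∧ w i j = false)

/-- Uniform average of `f` over `S × T`. -/
noncomputable def avg2 {N : ℕ} (S T : Finset (Fin N)) (f : Fin N → Fin N → ℝ) : ℝ :=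
  (∑ j ∈ S, ∑ l ∈ T, f j l) / ((S.card : ℝ) * (T.card : ℝ))

open scoped Classical in
/-- The fraction of pairs of `S × T` satisfying `p`. -/
noncomputable def frac2 {N : ℕ} (S T : Finset (Fin N)) (p : Fin N → Fin N → Prop) : ℝ :=
  (((S ×ˢ T).filter (fun q => p q.1 q.2)).card : ℝ) / ((S.card : ℝ) * (T.card : ℝ))

set_option maxHeartbeats 1000000 in
theorem stmt_7
    (N d K : ℕ) (hN : 1 ≤ N) (hd : 1 ≤ d) (hK : 1 ≤ K)
    (r : ℝ) (hr : 0 < r)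
    (z : Fin N → EuclideanSpace ℝ (Fin d)) (hz : ∀ i, ‖z i‖ = r)
    (y : Fin N → Fin K)
    (hD : ∀ k, (classSet y k).Nonempty)
    (w : Fin N → Fin N → Bool)
    (hsym : ∀ i j, w i j = w j i)
    (hdiag : ∀ i, w i i = true)
    (hcls : ∀ i j, w i j = true → y i = y j)
    (i : Fin N)
    (hT2 : (T2 w i).Nonempty) (hT1 : (T1 y w i).Nonempty)
    (dT qT : ℝ) (hdT1 : r ^ 2 / 3 ≤ dT) (hdT2 : dT ≤ r ^ 2)
    (hqT0 : 0 ≤ qT) (hqT1 : qT ≤ 1)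
    (hP : frac2 (T2 w i) (T1 y w i) (fun j l => ⟪z j, z l⟫ ≤ dT) ≤ qT) :
    avg2 (T2 w i) (T1 y w i) (fun j l => ⟪z j, z l⟫) ≥
      (3 / 2) * dT - (1 / 2 + Real.sqrt (6 * qT)) * r ^ 2 := by
  classical
  set S := T2 w i with hSdef
  set T := T1 y w i with hTdef
  have hS : (0:ℝ) < S.card := by exact_mod_cast Finset.card_pos.mpr hT2
  have hT : (0:ℝ) < T.card := by exact_mod_cast Finset.card_pos.mpr hT1
  set n : ℝ := (S.card : ℝ) * (T.card : ℝ) with hndef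
  have hn0 : (0:ℝ) < n := mul_pos hS hT
  set B := (S ×ˢ T).filter (fun q => ⟪z q.1, z q.2⟫ ≤ dT) with hBdef
  set C := (S ×ˢ T).filter (fun q => ¬ ⟪z q.1, z q.2⟫ ≤ dT) with hCdef
  set b : ℝ := (B.card : ℝ) with hbdef
  set c : ℝ := (C.card : ℝ) with hcdef
  have hb0 : 0 ≤ b := by positivity
  have hfrac : frac2 S T (fun j l => ⟪z j, z l⟫ ≤ dT) = b / n := by
    simp [frac2, hbdef, hBdef, hndef]
  have hbqn : b ≤ qT * n := by
    rw [hfrac, div_le_iff₀ hn0] at hP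
    linarith
  have hcard : b + c = n := by
    have h := Finset.card_filter_add_card_filter_not (s := S ×ˢ T)
      (p := fun q => ⟪z q.1, z q.2⟫ ≤ dT)
    have h2 := congrArg (fun m : ℕ => (m : ℝ)) h
    push_cast [Finset.card_product] at h2
    rw [hbdef, hcdef, hBdef, hCdef, hndef]
    exact_mod_cast h2
  have hlow : ∀ p : Fin N × Fin N, -(r^2) ≤ ⟪z p.1, z p.2⟫ := by
    intro p
    have := abs_real_inner_le_norm (z p.1) (z p.2)
    rw [hz p.1, hz p.2, abs_le] at this
    nlinarith [this.1]
  have hsplit := Finset.sum_filter_add_sum_filter_not (S ×ˢ T)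
    (fun q => ⟪z q.1, z q.2⟫ ≤ dT) (fun q : Fin N × Fin N => ⟪z q.1, z q.2⟫)
  have hsum1 : b * (-(r^2)) ≤ ∑ q ∈ B, ⟪z q.1, z q.2⟫ := by
    have := Finset.card_nsmul_le_sum B (fun q : Fin N × Fin N => ⟪z q.1, z q.2⟫) (-(r^2))
      (fun x _ => hlow x)
    simpa [nsmul_eq_mul, hbdef] using this
  have hsum2 : c * dT ≤ ∑ q ∈ C, ⟪z q.1, z q.2⟫ := by
    have := Finset.card_nsmul_le_sum C (fun q : Fin N × Fin N => ⟪z q.1, z q.2⟫) dT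
      (fun x hx => le_of_not_ge (Finset.mem_filter.mp hx).2)
    simpa [nsmul_eq_mul, hcdef] using this
  have hSum : ∑ j ∈ S, ∑ l ∈ T, ⟪z j, z l⟫ = ∑ q ∈ S ×ˢ T, ⟪z q.1, z q.2⟫ := by
    rw [Finset.sum_product]
  set s : ℝ := Real.sqrt (6 * qT) with hsdef
  have hs0 : 0 ≤ s := Real.sqrt_nonneg _
  have hs2 : s ^ 2 = 6 * qT := Real.sq_sqrt (by linarith)
  have hs2q : 2 * qT ≤ s := by nlinarith
  have hkey : b * (dT + r^2) ≤ s * (n * r^2) := by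
    calc b * (dT + r^2) ≤ (qT * n) * (dT + r^2) :=
          mul_le_mul_of_nonneg_right hbqn (by have := pow_pos hr 2; linarith)
      _ ≤ (qT * n) * (2 * r^2) := by
          apply mul_le_mul_of_nonneg_left (by linarith)
          exact mul_nonneg hqT0 hn0.le
      _ = (2 * qT) * (n * r^2) := by ring
      _ ≤ s * (n * r^2) := mul_le_mul_of_nonneg_right hs2q (by positivity)
  have h5 : 0 ≤ (r^2 - dT) * n := mul_nonneg (by linarith) hn0.le
  have hcdT : c * dT = (n - b) * dT := by
    rw [show c = n - b by linarith]
  have habs : (3 / 2 * dT - (1 / 2 + s) * r ^ 2) * n ≤ b * (-(r^2)) + c * dT := by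
    nlinarith [hkey, h5, hcdT]
  rw [avg2, ge_iff_le, ← hndef, le_div_iff₀ hn0, hSum, ← hsplit, ← hBdef, ← hCdef]
  linarith [hsum1, hsum2]
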